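/- Let f : A →+* B be an injective homomorphism of commutative rings and a ∈ A an element such that for every x ∈ A, if f a divides f x in B then a divides x in A. Let E be a projective A-module. Then: (i) the natural A-linear map E → B ⊗[A] E sending x to 1 ⊗ x is injective; and (ii) for every x ∈ E such that there exists y ∈ B ⊗[A] E with 1 ⊗ x = a • y, there exists z ∈ E with x = a • z. -/

import Mathlib

open scoped TensorProduct

/-- Step in the proof of Proposition 4.1: if `A ⊆ B` is an `a`-saturated injection of commutative
rings (i.e. `aB ∩ A = aA`) and `E` is a projective `A`-module, then `E → B ⊗[A] E` is injective
and `a`-saturated. -/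
theorem injective_and_saturated_baseChange
    {A B : Type*} [CommRing A] [CommRing B] (f : A →+* B)
    (hf : Function.Injective f) (a : A) (hsat : ∀ x : A, f a ∣ f x → a ∣ x)
    (E : Type*) [AddCommGroup E] [Module A E] [Module.Projective A E] :
    letI := f.toAlgebra
    Function.Injective (fun x : E => (1 : B) ⊗ₜ[A] x) ∧
      ∀ x : E, (∃ y : B ⊗[A] E, (1 : B) ⊗ₜ[A] x = a • y) → ∃ z : E, x = a • z := by
  classical
  letI := f.toAlgebra
  obtain ⟨s, hs⟩ := Module.Projective.out (R := A) (P := E)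
  set π : (E →₀ A) →ₗ[A] E := Finsupp.linearCombination A id with hπ
  -- auxiliary linear map extracting "coordinates in B"
  set g : B ⊗[A] E →ₗ[A] (E →₀ B) :=
    (TensorProduct.finsuppScalarRight A A B E).toLinearMap ∘ₗ s.lTensor B with hg
  have hsmul : ∀ (r : A) (b : B), r • b = f r * b := by
    intro r b
    rw [Algebra.smul_def, RingHom.algebraMap_toAlgebra]
  have hgtm : ∀ (x : E) (i : E), g ((1 : B) ⊗ₜ[A] x) i = f ((s x) i) := by
    intro x i
    simp only [hg, LinearMap.comp_apply, LinearMap.lTensor_tmul,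
      LinearEquiv.coe_coe, TensorProduct.finsuppScalarRight_apply_tmul_apply]
    rw [hsmul, mul_one]
  constructor
  · -- injectivity
    intro x x' h
    have h0 : (1 : B) ⊗ₜ[A] (x - x') = 0 := by
      simp only [] at h
      rw [TensorProduct.tmul_sub, h, sub_self]
    have hz : s (x - x') = 0 := by
      ext i
      apply hf
      rw [← hgtm (x - x') i, h0]
      simp
    have := hs (x - x')
    rw [hz, map_zero] at this
    exact sub_eq_zero.mp this.symm
  · -- saturation
    intro x ⟨y, hy⟩
    have hdvd : ∀ i : E, a ∣ (s x) i := by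
      intro i
      apply hsat
      refine ⟨g y i, ?_⟩
      rw [← hgtm x i, hy, map_smul, Finsupp.smul_apply, hsmul]
    -- choose coordinatewise quotients, vanishing where s x vanishes
    set d : E → A := fun i => if h0 : (s x) i = 0 then 0 else (hdvd i).choose with hd
    have hdspec : ∀ i, (s x) i = a * d i := by
      intro i
      by_cases h0 : (s x) i = 0
      · simp [hd, h0]
      · simp only [hd, dif_neg h0]
        exact (hdvd i).choose_spec
    set c : E →₀ A := Finsupp.onFinset (s x).support d
      (fun i hi => by
        simp only [Finsupp.mem_support_iff]
        intro h0
        apply hi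
        simp [hd, h0]) with hc
    have hac : a • c = s x := by
      ext i
      rw [Finsupp.smul_apply, smul_eq_mul]
      simp only [hc, Finsupp.onFinset_apply]
      exact (hdspec i).symm
    refine ⟨π c, ?_⟩
    calc x = π (s x) := (hs x).symm
    _ = π (a • c) := by rw [hac]
    _ = a • π c := map_smul π a c
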